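/- arXiv:math/0605617 — 4 statements merged into one kernel-verified Lean document; each statement's English description precedes it below -/
import Mathlib

section
/- For every real α > 0 and σ > 0, the integral ∫₀^∞ u^{α-1} (1 - Φ(√u/σ)) du equals 2^{α-1} Γ(α + 1/2) σ^{2α} / (α √π), where Φ is the standard normal cumulative distribution function. -/
open Real MeasureTheory Set

/-- The standard normal cumulative distribution function. -/
noncomputable def stdNormalCDF (y : ℝ) : ℝ :=
  (Real.sqrt (2 * Real.pi))⁻¹ * ∫ z in Set.Iic y, Real.exp (-z ^ 2 / 2)

lemma gauss_integrable : Integrable (fun z : ℝ => Real.exp (-z ^ 2 / 2)) := by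
  have h := integrable_exp_neg_mul_sq (show (0:ℝ) < 1/2 by norm_num)
  exact h.congr (ae_of_all _ fun z => by ring_nf)

lemma stdNormal_tail (y : ℝ) :
    1 - stdNormalCDF y
      = (Real.sqrt (2 * Real.pi))⁻¹ * ∫ z in Set.Ioi y, Real.exp (-z ^ 2 / 2) := by
  have hsplit : (∫ z in Iic y, Real.exp (-z ^ 2 / 2)) + ∫ z in Ioi y, Real.exp (-z ^ 2 / 2)
      = ∫ z : ℝ, Real.exp (-z ^ 2 / 2) :=
    intervalIntegral.integral_Iic_add_Ioi gauss_integrable.integrableOn gauss_integrable.integrableOn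
  have htot : ∫ z : ℝ, Real.exp (-z ^ 2 / 2) = Real.sqrt (2 * Real.pi) := by
    have h := integral_gaussian (1/2)
    rw [show ((π : ℝ) / (1/2)) = 2 * π by ring] at h
    rw [← h]
    exact integral_congr_ae (ae_of_all _ fun z => by ring_nf)
  have hpos : 0 < Real.sqrt (2 * Real.pi) := Real.sqrt_pos.2 (by positivity)
  rw [Real.sqrt_mul (by norm_num : (0:ℝ) ≤ 2)] at htot hpos
  rw [stdNormalCDF, Real.sqrt_mul (by norm_num : (0:ℝ) ≤ 2)]
  field_simp
  simp only [neg_div] at hsplit htot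
  linarith [hsplit, htot]

theorem gaussian_tail_moment (α σ : ℝ) (hα : 0 < α) (hσ : 0 < σ) :
    ∫ u in Set.Ioi (0 : ℝ), u ^ (α - 1) * (1 - stdNormalCDF (Real.sqrt u / σ))
      = 2 ^ (α - 1) * Real.Gamma (α + 1 / 2) * σ ^ (2 * α) / (α * Real.sqrt Real.pi) := by
  set c : ℝ := (Real.sqrt (2 * Real.pi))⁻¹ with hc
  set f : ℝ → ℝ → ℝ := fun u z =>
    if Real.sqrt u / σ < z then u ^ (α - 1) * Real.exp (-z ^ 2 / 2) else 0 with hf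
  set K : ℝ → ℝ := Set.indicator (Ioi (0:ℝ))
    (fun z => Real.exp (-z ^ 2 / 2) * ((z * σ) ^ 2) ^ α / α) with hK
  -- rewrite the indicator condition
  have hcond : ∀ (z : ℝ), 0 < z → ∀ u : ℝ, (Real.sqrt u / σ < z ↔ u < (z * σ) ^ 2) := by
    intro z hz u
    rw [div_lt_iff₀ hσ, Real.sqrt_lt' (mul_pos hz hσ)]
  -- the section functions and their integrals
  have hzneg : ∀ z : ℝ, z ≤ 0 → ∀ u ∈ Ioi (0:ℝ), f u z = 0 := by
    intro z hz u hu
    have h1 : (0:ℝ) < Real.sqrt u / σ := div_pos (Real.sqrt_pos.2 hu) hσ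
    simp only [hf, if_neg (not_lt.2 (hz.trans h1.le))]
  have hzpos : ∀ z : ℝ, 0 < z → ∀ u : ℝ,
      f u z = Set.indicator (Iio ((z * σ) ^ 2))
        (fun u => u ^ (α - 1) * Real.exp (-z ^ 2 / 2)) u := by
    intro z hz u
    simp only [hf, Set.indicator_apply, Set.mem_Iio, hcond z hz u]
  -- integrability of the rpow factor on bounded intervals
  have hrpowInt : ∀ b : ℝ, 0 ≤ b → IntegrableOn (fun u : ℝ => u ^ (α - 1)) (Ioo 0 b) := by
    intro b hb
    have h1 : IntervalIntegrable (fun u : ℝ => u ^ (α - 1)) volume 0 b :=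
      intervalIntegral.intervalIntegrable_rpow' (by linarith)
    rw [intervalIntegrable_iff_integrableOn_Ioc_of_le hb] at h1
    exact h1.mono_set Ioo_subset_Ioc_self
  -- sections are integrable
  have hsec : ∀ z : ℝ, Integrable (fun u => f u z) (volume.restrict (Ioi 0)) := by
    intro z
    rcases le_or_gt z 0 with hz | hz
    · refine (integrable_zero _ _ _).congr ?_
      filter_upwards [ae_restrict_mem measurableSet_Ioi] with u hu
      exact (hzneg z hz u hu).symm
    · have : (fun u => f u z) = Set.indicator (Iio ((z * σ) ^ 2))
          (fun u => u ^ (α - 1) * Real.exp (-z ^ 2 / 2)) := funext (hzpos z hz)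
      rw [this, integrable_indicator_iff measurableSet_Iio]
      unfold IntegrableOn
      rw [Measure.restrict_restrict measurableSet_Iio, Set.Iio_inter_Ioi]
      exact ((hrpowInt _ (by positivity)).mul_const _)
  -- value of the section integrals
  have key : ∀ z : ℝ, (∫ u in Ioi (0:ℝ), f u z) = K z := by
    intro z
    rcases le_or_gt z 0 with hz | hz
    · rw [setIntegral_congr_fun measurableSet_Ioi (fun u hu => hzneg z hz u hu)]
      simp [hK, Set.indicator_apply, not_lt.2 hz]
    · have h1 : (∫ u in Ioi (0:ℝ), f u z)
          = ∫ u in Ioo (0:ℝ) ((z * σ) ^ 2), u ^ (α - 1) * Real.exp (-z ^ 2 / 2) := by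
        rw [show (Ioo (0:ℝ) ((z * σ) ^ 2)) = Ioi 0 ∩ Iio ((z * σ) ^ 2) from
          (Set.Ioi_inter_Iio).symm, ← setIntegral_indicator measurableSet_Iio]
        exact setIntegral_congr_fun measurableSet_Ioi (fun u _ => hzpos z hz u)
      have h2 : (∫ u in Ioo (0:ℝ) ((z * σ) ^ 2), u ^ (α - 1)) = ((z * σ) ^ 2) ^ α / α := by
        have hb : (0:ℝ) ≤ (z * σ) ^ 2 := by positivity
        rw [← integral_Ioc_eq_integral_Ioo, ← intervalIntegral.integral_of_le hb,
          integral_rpow (Or.inl (by linarith : (-1:ℝ) < α - 1)),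
          show α - 1 + 1 = α by ring, Real.zero_rpow hα.ne', sub_zero]
      rw [h1, integral_mul_const, h2, hK,
        Set.indicator_of_mem (Set.mem_Ioi.2 hz)]
      ring
  -- norms of sections
  have keynorm : ∀ z : ℝ, (∫ u in Ioi (0:ℝ), ‖f u z‖) = K z := by
    intro z
    rw [← key z]
    refine setIntegral_congr_fun measurableSet_Ioi (fun u hu => ?_)
    rw [Real.norm_eq_abs, abs_of_nonneg]
    simp only [hf]
    split_ifs
    · have := Real.rpow_pos_of_pos hu (α - 1)
      positivity
    · exact le_refl 0
  -- measurability of the two-variable function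
  have hmeas : AEStronglyMeasurable (Function.uncurry f)
      ((volume.restrict (Ioi 0)).prod volume) := by
    have heq : Function.uncurry f = Set.indicator {p : ℝ × ℝ | Real.sqrt p.1 / σ < p.2}
        (fun p => p.1 ^ (α - 1) * Real.exp (-p.2 ^ 2 / 2)) := by
      funext p
      simp only [Function.uncurry, hf, Set.indicator_apply, Set.mem_setOf_eq]
    rw [heq]
    refine (Measurable.indicator (by fun_prop) ?_).aestronglyMeasurable
    exact measurableSet_lt (by fun_prop) measurable_snd
  -- integrability of K
  have hKint : Integrable K := by
    rw [hK, integrable_indicator_iff measurableSet_Ioi]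
    have base : IntegrableOn
        (fun z : ℝ => z ^ (2*α) * Real.exp (-(1/2) * z ^ 2) * (σ ^ (2*α) / α)) (Ioi 0) :=
      (integrableOn_rpow_mul_exp_neg_mul_sq (show (0:ℝ) < 1/2 by norm_num)
        (show (-1:ℝ) < 2*α by linarith)).mul_const _
    refine base.congr_fun (fun z hz => ?_) measurableSet_Ioi
    have hz' : (0:ℝ) < z := hz
    have h3 : (((z * σ) ^ 2 : ℝ)) ^ α = z ^ (2*α) * σ ^ (2*α) := by
      rw [mul_pow, Real.mul_rpow (by positivity) (by positivity),
        ← Real.rpow_natCast z 2, ← Real.rpow_natCast σ 2,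
        ← Real.rpow_mul hz'.le, ← Real.rpow_mul hσ.le]
      norm_num
    dsimp only
    rw [h3, show -(1/2 : ℝ) * z ^ 2 = -z ^ 2 / 2 by ring]
    ring
  -- rewrite the integrand using the tail formula
  have hstep1 : ∀ u ∈ Ioi (0:ℝ), u ^ (α - 1) * (1 - stdNormalCDF (Real.sqrt u / σ))
      = c * ∫ z : ℝ, f u z := by
    intro u hu
    rw [stdNormal_tail]
    have hind : (fun z : ℝ => f u z) = Set.indicator (Ioi (Real.sqrt u / σ))
        (fun z => u ^ (α - 1) * Real.exp (-z ^ 2 / 2)) := by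
      funext z; simp [hf, Set.indicator_apply, Set.mem_Ioi]
    rw [hind, integral_indicator measurableSet_Ioi, integral_const_mul]
    ring
  rw [setIntegral_congr_fun measurableSet_Ioi hstep1, integral_const_mul]
  -- Fubini
  have hFub : Integrable (Function.uncurry f) ((volume.restrict (Ioi 0)).prod volume) := by
    rw [integrable_prod_iff' hmeas]
    exact ⟨ae_of_all _ hsec, hKint.congr (ae_of_all _ fun z => (keynorm z).symm)⟩
  rw [integral_integral_swap hFub, integral_congr_ae (ae_of_all _ key)]
  -- compute the remaining integral
  rw [hK, integral_indicator measurableSet_Ioi]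
  have hval : ∀ z ∈ Ioi (0:ℝ), Real.exp (-z ^ 2 / 2) * ((z * σ) ^ 2) ^ α / α
      = (σ ^ (2*α) / α) * (z ^ (2*α) * Real.exp (-(1/2) * z ^ (2:ℝ))) := by
    intro z hz
    have hz' : (0:ℝ) < z := hz
    have h3 : (((z * σ) ^ 2 : ℝ)) ^ α = z ^ (2*α) * σ ^ (2*α) := by
      rw [mul_pow, Real.mul_rpow (by positivity) (by positivity),
        ← Real.rpow_natCast z 2, ← Real.rpow_natCast σ 2,
        ← Real.rpow_mul hz'.le, ← Real.rpow_mul hσ.le]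
      norm_num
    rw [h3, show (z : ℝ) ^ (2:ℝ) = z ^ 2 from Real.rpow_natCast z 2,
      show -(1/2 : ℝ) * z ^ 2 = -z ^ 2 / 2 by ring]
    ring
  rw [setIntegral_congr_fun measurableSet_Ioi hval, integral_const_mul,
    integral_rpow_mul_exp_neg_mul_rpow two_pos (by linarith : (-1:ℝ) < 2*α)
      (by norm_num : (0:ℝ) < 1/2)]
  show c * (σ ^ (2*α) / α * ((1/2 : ℝ) ^ (-(2*α + 1) / 2) * (1/2) * Gamma ((2*α + 1)/2))) = _
  have h1 : ((1:ℝ)/2) ^ (-(2*α + 1) / 2) = (2:ℝ) ^ ((2*α + 1)/2) := by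
    rw [one_div, Real.inv_rpow (by norm_num : (0:ℝ) ≤ 2),
      ← Real.rpow_neg (by norm_num : (0:ℝ) ≤ 2), neg_div, neg_neg]
  have h2 : (2:ℝ) ^ ((2*α + 1)/2) = 2 ^ (α - 1) * Real.sqrt 2 * 2 := by
    rw [show (2*α + 1)/2 = (α - 1) + (1/2) + 1 by ring,
      Real.rpow_add two_pos, Real.rpow_add two_pos, Real.rpow_one, Real.sqrt_eq_rpow]
  have hΓarg : (2*α + 1)/2 = α + 1/2 := by ring
  have hsqrt2pi : Real.sqrt (2 * π) = Real.sqrt 2 * Real.sqrt π :=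
    Real.sqrt_mul (by norm_num) π
  have hs2 : Real.sqrt 2 ≠ 0 := by positivity
  have hsπ : Real.sqrt π ≠ 0 := by positivity
  rw [h1, h2, hΓarg, hc, hsqrt2pi]
  field_simp
end

section
/- Let X₁, X₂, ... be i.i.d. centered random variables with variance σ² ∈ (0,∞) and Sₖ = X₁ + ... + Xₖ. Then for every k ≥ 1, ε > 0, and r > 1, P(Sₖ ≥ εk) ≤ k P(X₁ ≥ εk/r) + (e r σ²)^r ε^{-2r} k^{-r}. -/
open Real MeasureTheory Finset ProbabilityTheory
open scoped ENNReal

lemma exp_le_quadratic_of_nonpos {a : ℝ} (ha : a ≤ 0) : Real.exp a ≤ 1 + a + a ^ 2 / 2 := by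
  have h := Real.quadratic_le_exp_of_nonneg (neg_nonneg.2 ha)
  have h2 : Real.exp a * Real.exp (-a) = 1 := by rw [← Real.exp_add]; simp
  nlinarith [Real.exp_pos a, sq_nonneg a, sq_nonneg (a ^ 2), sq_nonneg (1 + a)]

lemma exp_sub_mul_sq_mono {a b : ℝ} (ha : 0 ≤ a) (hab : a ≤ b) :
    (Real.exp a - 1 - a) * b ^ 2 ≤ (Real.exp b - 1 - b) * a ^ 2 := by
  have hb : 0 ≤ b := ha.trans hab
  have hexp : ∀ x : ℝ, Real.exp x - 1 - x = ∑' n : ℕ, x ^ (n + 2) / ((n + 2).factorial : ℝ) := by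
    intro x
    have hs : Summable (fun n : ℕ => x ^ n / (n.factorial : ℝ)) := Real.summable_pow_div_factorial x
    have h0 : Real.exp x = ∑' n : ℕ, x ^ n / (n.factorial : ℝ) := by
      rw [Real.exp_eq_exp_ℝ, NormedSpace.exp_eq_tsum_div]
    have h1 := (Summable.sum_add_tsum_nat_add (f := fun n : ℕ => x ^ n / (n.factorial : ℝ)) 2 hs).symm
    simp [Finset.sum_range_succ] at h1
    rw [h0, h1]
    ring
  rw [hexp a, hexp b, ← tsum_mul_right, ← tsum_mul_right]
  have hsa : Summable (fun n : ℕ => a ^ (n + 2) / (((n + 2).factorial : ℕ) : ℝ) * b ^ 2) :=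
    ((Real.summable_pow_div_factorial a).comp_injective (add_left_injective 2)).mul_right _
  have hsb : Summable (fun n : ℕ => b ^ (n + 2) / (((n + 2).factorial : ℕ) : ℝ) * a ^ 2) :=
    ((Real.summable_pow_div_factorial b).comp_injective (add_left_injective 2)).mul_right _
  refine Summable.tsum_le_tsum (fun n => ?_) hsa hsb
  have h1 : a ^ (n + 2) * b ^ 2 ≤ b ^ (n + 2) * a ^ 2 := by
    have e1 : a ^ (n + 2) * b ^ 2 = a ^ n * (a * b) ^ 2 := by ring
    have e2 : b ^ (n + 2) * a ^ 2 = b ^ n * (a * b) ^ 2 := by ring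
    rw [e1, e2]
    exact mul_le_mul_of_nonneg_right (pow_le_pow_left₀ ha hab n) (sq_nonneg _)
  have hfac : (0:ℝ) < (((n + 2).factorial : ℕ) : ℝ) := by positivity
  rw [div_mul_eq_mul_div, div_mul_eq_mul_div]
  exact div_le_div_of_nonneg_right h1 hfac.le

lemma exp_key_bound {t v y : ℝ} (ht : 0 < t) (hv : 0 < v) (hy : y ≤ v) :
    Real.exp (t * y) ≤ 1 + t * y + (Real.exp (t * v) - 1 - t * v) / v ^ 2 * y ^ 2 := by
  have hb : 0 < t * v := mul_pos ht hv
  have hab : t * y ≤ t * v := mul_le_mul_of_nonneg_left hy ht.le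
  have hrw : (Real.exp (t * v) - 1 - t * v) / v ^ 2 * y ^ 2
      = (Real.exp (t * v) - 1 - t * v) * (t * y) ^ 2 / (t * v) ^ 2 := by
    field_simp
  rw [hrw]
  rcases le_or_gt (t * y) 0 with ha | ha
  · have h1 := exp_le_quadratic_of_nonpos ha
    have h2 : (t * v) ^ 2 / 2 ≤ Real.exp (t * v) - 1 - t * v := by
      nlinarith [Real.quadratic_le_exp_of_nonneg hb.le]
    have h3 : (t * y) ^ 2 / 2 ≤ (Real.exp (t * v) - 1 - t * v) * (t * y) ^ 2 / (t * v) ^ 2 := by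
      rw [le_div_iff₀ (by positivity)]
      nlinarith [mul_le_mul_of_nonneg_right h2 (sq_nonneg (t * y))]
    linarith
  · have h1 := exp_sub_mul_sq_mono ha.le hab
    have h2 : (Real.exp (t * y) - 1 - t * y)
        ≤ (Real.exp (t * v) - 1 - t * v) * (t * y) ^ 2 / (t * v) ^ 2 := by
      rw [le_div_iff₀ (by positivity)]
      linarith
    linarith

theorem fuk_nagaev_inequality
    {Ω : Type*} [MeasurableSpace Ω] (μ : Measure Ω) [IsProbabilityMeasure μ]
    (X : ℕ → Ω → ℝ) (hmeas : ∀ i, Measurable (X i))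
    (hindep : iIndepFun X μ)
    (hident : ∀ i, IdentDistrib (X i) (X 0) μ μ)
    (σ : ℝ) (hσ : 0 < σ)
    (hint : Integrable (X 0) μ) (hmean : μ[X 0] = 0)
    (hint2 : Integrable (fun ω => (X 0 ω) ^ 2) μ) (hvar : μ[fun ω => (X 0 ω) ^ 2] = σ ^ 2) :
    ∀ (k : ℕ) (ε r : ℝ), 1 ≤ k → 0 < ε → 1 < r →
      (μ {ω | ε * k ≤ ∑ i ∈ Finset.range k, X i ω}).toReal
        ≤ k * (μ {ω | ε * k / r ≤ X 0 ω}).toReal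
          + (Real.exp 1 * r * σ ^ 2) ^ r * ε ^ (-(2 : ℝ) * r) * (k : ℝ) ^ (-r) := by
  intro k ε r hk hε hr
  have hk1 : (1 : ℝ) ≤ (k : ℝ) := by exact_mod_cast hk
  have hk0 : (0 : ℝ) < (k : ℝ) := by linarith
  have hr0 : (0 : ℝ) < r := by linarith
  have hσ2 : (0 : ℝ) < σ ^ 2 := by positivity
  set A : ℝ := ε ^ 2 * k / (r * σ ^ 2) with hA_def
  have hA0 : 0 < A := by positivity
  have key_eq : (Real.exp 1 * r * σ ^ 2) ^ r * ε ^ (-(2 : ℝ) * r) * (k : ℝ) ^ (-r)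
      = Real.exp (r - r * Real.log A) := by
    rw [Real.rpow_def_of_pos (by positivity), Real.rpow_def_of_pos hε,
      Real.rpow_def_of_pos hk0, ← Real.exp_add, ← Real.exp_add]
    congr 1
    rw [hA_def, Real.log_div (by positivity) (by positivity),
      Real.log_mul (by positivity : (0:ℝ) < Real.exp 1 * r).ne' hσ2.ne',
      Real.log_mul (Real.exp_pos 1).ne' hr0.ne',
      Real.log_mul (by positivity : (0:ℝ) < ε ^ 2).ne' hk0.ne',
      Real.log_mul hr0.ne' hσ2.ne', Real.log_exp, Real.log_pow, Real.log_pow]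
    push_cast
    ring
  have hμ_ne_top : ∀ s : Set Ω, μ s ≠ ⊤ := fun s => measure_ne_top μ s
  by_cases hsmall : ε ^ 2 * k ≤ r * σ ^ 2
  · -- trivial case
    have hA1 : A ≤ 1 := by
      rw [hA_def, div_le_one (by positivity)]
      exact hsmall
    have hlog : Real.log A ≤ 0 := Real.log_nonpos hA0.le hA1
    have h2 : (1 : ℝ) ≤ Real.exp (r - r * Real.log A) := by
      apply Real.one_le_exp
      nlinarith
    have h3 : (μ {ω | ε * k ≤ ∑ i ∈ Finset.range k, X i ω}).toReal ≤ 1 := by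
      have := ENNReal.toReal_mono (by norm_num) (prob_le_one (μ := μ)
        (s := {ω | ε * k ≤ ∑ i ∈ Finset.range k, X i ω}))
      simpa using this
    have h4 : 0 ≤ (k : ℝ) * (μ {ω | ε * k / r ≤ X 0 ω}).toReal := by positivity
    rw [key_eq]
    linarith
  · push_neg at hsmall
    have hA1 : 1 < A := by
      rw [hA_def, lt_div_iff₀ (by positivity)]
      linarith
    set v : ℝ := ε * k / r with hv_def
    have hv : 0 < v := by positivity
    have hlogA : 0 < Real.log A := Real.log_pos hA1
    set t : ℝ := Real.log A / v with ht_def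
    have ht : 0 < t := by positivity
    have htv : t * v = Real.log A := div_mul_cancel₀ _ hv.ne'
    have hetv : Real.exp (t * v) = A := by rw [htv, Real.exp_log hA0]
    set Y : ℕ → Ω → ℝ := fun i ω => min (X i ω) v with hY_def
    have hYmeas : ∀ i, Measurable (Y i) := fun i => (hmeas i).min measurable_const
    have hYindep : iIndepFun Y μ :=
      hindep.comp (fun _ x => min x v) (fun _ => measurable_id.min measurable_const)
    have hYident : ∀ i, IdentDistrib (Y i) (Y 0) μ μ := fun i =>
      (hident i).comp (measurable_id.min measurable_const)
    have hYle : ∀ i ω, Y i ω ≤ v := fun i ω => min_le_right _ _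
    -- set inclusion
    have hsub : {ω | ε * k ≤ ∑ i ∈ Finset.range k, X i ω}
        ⊆ {ω | ε * k ≤ ∑ i ∈ Finset.range k, Y i ω}
          ∪ ⋃ i ∈ Finset.range k, {ω | v ≤ X i ω} := by
      intro ω hω
      by_cases hbad : ∃ i ∈ Finset.range k, v ≤ X i ω
      · right
        obtain ⟨i, hi, hvi⟩ := hbad
        exact Set.mem_biUnion hi hvi
      · left
        push_neg at hbad
        have heq : ∀ i ∈ Finset.range k, Y i ω = X i ω := fun i hi =>
          min_eq_left (hbad i hi).le
        show ε * k ≤ ∑ i ∈ Finset.range k, Y i ω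
        rw [Finset.sum_congr rfl heq]
        exact hω
    have hm1 : μ {ω | ε * k ≤ ∑ i ∈ Finset.range k, X i ω}
        ≤ μ {ω | ε * k ≤ ∑ i ∈ Finset.range k, Y i ω}
          + (k : ℝ≥0∞) * μ {ω | v ≤ X 0 ω} := by
      refine (measure_mono hsub).trans ((measure_union_le _ _).trans ?_)
      refine add_le_add_right ?_ _
      calc μ (⋃ i ∈ Finset.range k, {ω | v ≤ X i ω})
          ≤ ∑ i ∈ Finset.range k, μ {ω | v ≤ X i ω} := measure_biUnion_finset_le _ _
        _ = ∑ _i ∈ Finset.range k, μ {ω | v ≤ X 0 ω} := by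
            refine Finset.sum_congr rfl fun i _ => ?_
            exact (hident i).measure_mem_eq measurableSet_Ici
        _ = (k : ℝ≥0∞) * μ {ω | v ≤ X 0 ω} := by
            rw [Finset.sum_const, Finset.card_range, nsmul_eq_mul]
    have hm2 : (μ {ω | ε * k ≤ ∑ i ∈ Finset.range k, X i ω}).toReal
        ≤ (μ {ω | ε * k ≤ ∑ i ∈ Finset.range k, Y i ω}).toReal
          + (k : ℝ) * (μ {ω | v ≤ X 0 ω}).toReal := by
      have hfin : μ {ω | ε * k ≤ ∑ i ∈ Finset.range k, Y i ω}
          + (k : ℝ≥0∞) * μ {ω | v ≤ X 0 ω} ≠ ⊤ := by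
        apply ENNReal.add_ne_top.2
        exact ⟨hμ_ne_top _, ENNReal.mul_ne_top (by simp) (hμ_ne_top _)⟩
      have h := ENNReal.toReal_mono hfin hm1
      rwa [ENNReal.toReal_add (hμ_ne_top _) (ENNReal.mul_ne_top (by simp) (hμ_ne_top _)),
        ENNReal.toReal_mul, ENNReal.toReal_natCast] at h
    -- integrability facts
    have hint_exp : ∀ i, Integrable (fun ω => Real.exp (t * Y i ω)) μ := by
      intro i
      refine Integrable.mono' (integrable_const (Real.exp (t * v)))
        (((hYmeas i).const_mul t).exp.aestronglyMeasurable)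
        (Filter.Eventually.of_forall fun ω => ?_)
      rw [Real.norm_eq_abs, Real.abs_exp]
      exact Real.exp_le_exp.2 (mul_le_mul_of_nonneg_left (hYle i ω) ht.le)
    have hS_int : Integrable (fun ω => Real.exp (t * (∑ i ∈ Finset.range k, Y i) ω)) μ := by
      have hSm0 : Measurable (fun a => ∑ i ∈ Finset.range k, Y i a) :=
        Finset.measurable_sum _ (fun i _ => hYmeas i)
      have hSm : Measurable (∑ i ∈ Finset.range k, Y i) := by
        have : (∑ i ∈ Finset.range k, Y i) = fun a => ∑ i ∈ Finset.range k, Y i a :=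
          funext fun a => Finset.sum_apply a _ _
        rw [this]; exact hSm0
      refine Integrable.mono' (integrable_const (Real.exp (t * (k * v))))
        ((hSm.const_mul t).exp.aestronglyMeasurable)
        (Filter.Eventually.of_forall fun ω => ?_)
      rw [Real.norm_eq_abs, Real.abs_exp]
      apply Real.exp_le_exp.2
      apply mul_le_mul_of_nonneg_left _ ht.le
      rw [Finset.sum_apply]
      calc ∑ i ∈ Finset.range k, Y i ω ≤ ∑ _i ∈ Finset.range k, v :=
            Finset.sum_le_sum fun i _ => hYle i ω
        _ = (k : ℝ) * v := by rw [Finset.sum_const, Finset.card_range, nsmul_eq_mul]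
    have hY0_int : Integrable (Y 0) μ := by
      refine hint.mono (hYmeas 0).aestronglyMeasurable (Filter.Eventually.of_forall fun ω => ?_)
      rw [Real.norm_eq_abs, Real.norm_eq_abs]
      rcases le_total (X 0 ω) v with h | h
      · rw [show Y 0 ω = X 0 ω from min_eq_left h]
      · rw [show Y 0 ω = v from min_eq_right h, abs_of_pos hv]
        exact h.trans (le_abs_self _)
    have hY0_sq : ∀ ω, (Y 0 ω) ^ 2 ≤ (X 0 ω) ^ 2 := by
      intro ω
      rcases le_total (X 0 ω) v with h | h
      · rw [show Y 0 ω = X 0 ω from min_eq_left h]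
      · rw [show Y 0 ω = v from min_eq_right h]
        nlinarith
    have hY0_sq_int : Integrable (fun ω => (Y 0 ω) ^ 2) μ := by
      refine hint2.mono ((hYmeas 0).pow_const 2).aestronglyMeasurable
        (Filter.Eventually.of_forall fun ω => ?_)
      rw [Real.norm_eq_abs, Real.norm_eq_abs, abs_of_nonneg (sq_nonneg _),
        abs_of_nonneg (sq_nonneg _)]
      exact hY0_sq ω
    have hEY : ∫ ω, Y 0 ω ∂μ ≤ 0 := by
      rw [← hmean]
      exact integral_mono hY0_int hint (fun ω => min_le_left _ _)
    have hEY2 : ∫ ω, (Y 0 ω) ^ 2 ∂μ ≤ σ ^ 2 := by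
      rw [← hvar]
      exact integral_mono hY0_sq_int hint2 hY0_sq
    have hEY2_nonneg : 0 ≤ ∫ ω, (Y 0 ω) ^ 2 ∂μ :=
      integral_nonneg fun ω => sq_nonneg _
    set C : ℝ := (Real.exp (t * v) - 1 - t * v) / v ^ 2 with hC_def
    have hC0 : 0 ≤ C := by
      apply div_nonneg _ (sq_nonneg v)
      nlinarith [Real.add_one_le_exp (t * v)]
    have hmgf_le : mgf (Y 0) μ t ≤ Real.exp (C * σ ^ 2) := by
      have h1 : mgf (Y 0) μ t ≤ ∫ ω, (1 + t * Y 0 ω + C * (Y 0 ω) ^ 2) ∂μ := by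
        refine integral_mono (hint_exp 0) ?_ (fun ω => ?_)
        · exact ((integrable_const 1).add (hY0_int.const_mul t)).add (hY0_sq_int.const_mul C)
        · exact exp_key_bound ht hv (hYle 0 ω)
      have h2 : ∫ ω, (1 + t * Y 0 ω + C * (Y 0 ω) ^ 2) ∂μ
          = 1 + t * (∫ ω, Y 0 ω ∂μ) + C * ∫ ω, (Y 0 ω) ^ 2 ∂μ := by
        have i1 : Integrable (fun ω => 1 + t * Y 0 ω) μ :=
          (integrable_const 1).add (hY0_int.const_mul t)
        have i2 : Integrable (fun ω => C * (Y 0 ω) ^ 2) μ := hY0_sq_int.const_mul C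
        have i3 : Integrable (fun _ : Ω => (1 : ℝ)) μ := integrable_const 1
        have i4 : Integrable (fun ω => t * Y 0 ω) μ := hY0_int.const_mul t
        rw [integral_add i1 i2, integral_add i3 i4, integral_const,
          MeasureTheory.integral_const_mul, MeasureTheory.integral_const_mul]
        simp
      have h3 : 1 + t * (∫ ω, Y 0 ω ∂μ) + C * ∫ ω, (Y 0 ω) ^ 2 ∂μ ≤ 1 + C * σ ^ 2 := by
        have e1 : t * (∫ ω, Y 0 ω ∂μ) ≤ 0 := mul_nonpos_of_nonneg_of_nonpos ht.le hEY
        have e2 : C * (∫ ω, (Y 0 ω) ^ 2 ∂μ) ≤ C * σ ^ 2 := mul_le_mul_of_nonneg_left hEY2 hC0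
        linarith
      have h4 : 1 + C * σ ^ 2 ≤ Real.exp (C * σ ^ 2) := by
        linarith [Real.add_one_le_exp (C * σ ^ 2)]
      linarith
    have hmgf_pow : (mgf (Y 0) μ t) ^ k ≤ Real.exp ((k : ℝ) * (C * σ ^ 2)) := by
      calc (mgf (Y 0) μ t) ^ k ≤ (Real.exp (C * σ ^ 2)) ^ k :=
            pow_le_pow_left₀ (mgf_nonneg) hmgf_le k
        _ = Real.exp ((k : ℝ) * (C * σ ^ 2)) := by rw [← Real.exp_nat_mul]
    have hmgf_eq : mgf (∑ i ∈ Finset.range k, Y i) μ t = (mgf (Y 0) μ t) ^ k := by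
      rw [hYindep.mgf_sum hYmeas]
      rw [Finset.prod_congr rfl (fun i _ => ?_), Finset.prod_const, Finset.card_range]
      have := ((hYident i).comp (Measurable.exp (measurable_id.const_mul t))).integral_eq
      simpa [mgf, Function.comp] using this
    have chern := measure_ge_le_exp_mul_mgf (μ := μ) (X := ∑ i ∈ Finset.range k, Y i)
      (t := t) (ε * k) ht.le hS_int
    have hBset : {ω | ε * k ≤ (∑ i ∈ Finset.range k, Y i) ω}
        = {ω | ε * k ≤ ∑ i ∈ Finset.range k, Y i ω} := by
      ext ω; simp [Finset.sum_apply]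
    -- numeric bound
    have hnum : -t * (ε * k) + (k : ℝ) * (C * σ ^ 2) ≤ r - r * Real.log A := by
      have h1 : C ≤ A / v ^ 2 := by
        rw [hC_def, hetv]
        exact div_le_div_of_nonneg_right (by linarith [hlogA, htv]) (sq_nonneg v)
      have h2 : (k : ℝ) * (A / v ^ 2 * σ ^ 2) = r := by
        rw [hA_def, hv_def]
        field_simp [hε.ne', hk0.ne', hr0.ne', hσ.ne']
      have h3 : t * (ε * k) = r * Real.log A := by
        rw [ht_def, hv_def]
        field_simp [hε.ne', hk0.ne', hr0.ne']
      have h4 : (k : ℝ) * (C * σ ^ 2) ≤ (k : ℝ) * (A / v ^ 2 * σ ^ 2) := by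
        apply mul_le_mul_of_nonneg_left _ hk0.le
        exact mul_le_mul_of_nonneg_right h1 hσ2.le
      linarith
    have hB_le : (μ {ω | ε * k ≤ ∑ i ∈ Finset.range k, Y i ω}).toReal
        ≤ Real.exp (r - r * Real.log A) := by
      calc (μ {ω | ε * k ≤ ∑ i ∈ Finset.range k, Y i ω}).toReal
          = (μ {ω | ε * k ≤ (∑ i ∈ Finset.range k, Y i) ω}).toReal := by rw [hBset]
        _ ≤ Real.exp (-t * (ε * k)) * mgf (∑ i ∈ Finset.range k, Y i) μ t := chern
        _ = Real.exp (-t * (ε * k)) * (mgf (Y 0) μ t) ^ k := by rw [hmgf_eq]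
        _ ≤ Real.exp (-t * (ε * k)) * Real.exp ((k : ℝ) * (C * σ ^ 2)) :=
            mul_le_mul_of_nonneg_left hmgf_pow (Real.exp_pos _).le
        _ = Real.exp (-t * (ε * k) + (k : ℝ) * (C * σ ^ 2)) := (Real.exp_add _ _).symm
        _ ≤ Real.exp (r - r * Real.log A) := Real.exp_le_exp.2 hnum
    rw [key_eq]
    linarith
end

section
/- Let X₁, X₂, ... be i.i.d. random variables with E X₁ = 0, E X₁² = σ² ∈ (0,∞), and tail P(X₁ ≥ x) ~ a x^{-θ} as x → ∞ with a > 0, θ > 2. Then there exist constants c₁, c₂ > 0 such that for all k ≥ 1 and ε > 0, P(Sₖ ≥ εk) ≤ c₁ (ε^{-θ} k^{-(θ-1)} + e^{-c₂ ε² k}). -/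
open Real MeasureTheory Finset Filter ProbabilityTheory

lemma exp_le_one_add_add_sq {x : ℝ} (hx : x ≤ 1) : Real.exp x ≤ 1 + x + x ^ 2 := by
  rcases le_or_gt (-1) x with h | h
  · have h1 := Real.abs_exp_sub_one_sub_id_le (abs_le.2 ⟨h, hx⟩)
    have h2 := (abs_le.1 h1).2
    nlinarith
  · have h1 : Real.exp x < 1 := Real.exp_lt_one_iff.2 (by linarith)
    nlinarith

lemma rpow_le_mul_exp (θ : ℝ) (hθ : 0 < θ) :
    ∃ C : ℝ, 1 ≤ C ∧ ∀ x : ℝ, 0 ≤ x → x ^ θ ≤ C * Real.exp x := by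
  have h := tendsto_rpow_mul_exp_neg_mul_atTop_nhds_zero θ 1 one_pos
  have h2 : ∀ᶠ x : ℝ in atTop, x ^ θ * Real.exp (-1 * x) ≤ 1 :=
    h.eventually_le_const one_pos
  obtain ⟨x₀, hx₀⟩ := eventually_atTop.1 h2
  refine ⟨max 1 ((max x₀ 1) ^ θ), le_max_left _ _, fun x hx => ?_⟩
  have hC : (0:ℝ) < max 1 ((max x₀ 1) ^ θ) := lt_of_lt_of_le one_pos (le_max_left _ _)
  rcases le_or_gt x (max x₀ 1) with hle | hgt
  · calc x ^ θ ≤ (max x₀ 1) ^ θ := Real.rpow_le_rpow hx hle hθ.le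
    _ ≤ max 1 ((max x₀ 1) ^ θ) * 1 := by rw [mul_one]; exact le_max_right _ _
    _ ≤ max 1 ((max x₀ 1) ^ θ) * Real.exp x :=
        mul_le_mul_of_nonneg_left (Real.one_le_exp hx) hC.le
  · have h3 := hx₀ x (le_of_lt (lt_of_le_of_lt (le_max_left _ _) hgt))
    have h4 : x ^ θ ≤ Real.exp x := by
      have he : Real.exp (-1 * x) = (Real.exp x)⁻¹ := by
        rw [neg_one_mul, Real.exp_neg]
      rw [he] at h3
      have hex := Real.exp_pos x
      calc x ^ θ = x ^ θ * (Real.exp x)⁻¹ * Real.exp x := by field_simp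
      _ ≤ 1 * Real.exp x := mul_le_mul_of_nonneg_right h3 hex.le
      _ = Real.exp x := one_mul _
    calc x ^ θ ≤ Real.exp x := h4
    _ ≤ max 1 ((max x₀ 1) ^ θ) * Real.exp x := by
        nlinarith [Real.exp_pos x, (le_max_left 1 ((max x₀ 1) ^ θ))]


lemma chernoff_trunc
    {Ω : Type*} [MeasurableSpace Ω] (μ : Measure Ω) [IsProbabilityMeasure μ]
    (X : ℕ → Ω → ℝ) (hmeas : ∀ i, Measurable (X i))
    (hindep : iIndepFun X μ)
    (hident : ∀ i, IdentDistrib (X i) (X 0) μ μ)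
    (σ : ℝ) (hint : Integrable (X 0) μ) (hmean : μ[X 0] = 0)
    (hint2 : Integrable (fun ω => (X 0 ω) ^ 2) μ) (hvar : μ[fun ω => (X 0 ω) ^ 2] = σ ^ 2)
    (θ C_T : ℝ) (hCT : ∀ x : ℝ, 0 < x → (μ {ω | x ≤ X 0 ω}).toReal ≤ C_T * x ^ (-θ))
    (k : ℕ) (u v l : ℝ) (hv : 0 < v) (hl : 0 < l) :
    (μ {ω | u ≤ ∑ i ∈ Finset.range k, min (X i ω) v}).toReal
      ≤ Real.exp (-l * u + k * (l ^ 2 * σ ^ 2 + C_T * Real.exp (l * v) * l ^ θ)) := by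
  classical
  set Y : ℕ → Ω → ℝ := fun i ω => min (X i ω) v with hY
  have hYmeas : ∀ i, Measurable (Y i) := fun i => (hmeas i).min measurable_const
  have hminmeas : Measurable (fun x : ℝ => min x v) := measurable_id.min measurable_const
  have hYindep : iIndepFun Y μ :=
    hindep.comp (fun _ => fun x => min x v) (fun _ => hminmeas)
  have hYident : ∀ i, IdentDistrib (Y i) (Y 0) μ μ := fun i => (hident i).comp hminmeas
  -- integrability of Y 0
  have hYint : Integrable (Y 0) μ := by
    refine Integrable.mono' (hint.abs.add (integrable_const |v|)) ((hYmeas 0).aestronglyMeasurable)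
      (ae_of_all _ fun ω => ?_)
    simp only [Real.norm_eq_abs]
    rcases le_total (X 0 ω) v with h | h
    · rw [hY]; simp only [min_eq_left h]
      exact le_add_of_le_of_nonneg le_rfl (abs_nonneg _)
    · rw [hY]; simp only [min_eq_right h]
      exact le_add_of_nonneg_of_le (abs_nonneg _) le_rfl
  have hYmean : μ[Y 0] ≤ 0 := by
    rw [← hmean]
    exact integral_mono hYint hint (fun ω => min_le_left _ _)
  -- mgf bound for Y 0
  have hmgf : mgf (Y 0) μ l ≤ Real.exp (l ^ 2 * σ ^ 2 + C_T * Real.exp (l * v) * l ^ θ) := by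
    set A : Set Ω := {ω | 1 / l < X 0 ω} with hA
    have hAmeas : MeasurableSet A := measurableSet_lt measurable_const (hmeas 0)
    have hAbound : (μ A).toReal ≤ C_T * l ^ θ := by
      have h1 : μ A ≤ μ {ω | 1 / l ≤ X 0 ω} := by
        apply measure_mono
        intro ω h
        simp only [hA, Set.mem_setOf_eq] at *
        exact h.le
      have h2 := hCT (1 / l) (by positivity)
      have h3 : ((1 : ℝ) / l) ^ (-θ) = l ^ θ := by
        rw [one_div, Real.inv_rpow hl.le, Real.rpow_neg hl.le, inv_inv]
      calc (μ A).toReal ≤ (μ {ω | 1 / l ≤ X 0 ω}).toReal :=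
            ENNReal.toReal_mono (measure_ne_top μ _) h1
      _ ≤ C_T * (1 / l) ^ (-θ) := h2
      _ = C_T * l ^ θ := by rw [h3]
    have hpt : ∀ ω, Real.exp (l * Y 0 ω) ≤ 1 + l * Y 0 ω + l ^ 2 * (X 0 ω) ^ 2
        + A.indicator (fun _ => Real.exp (l * v)) ω := by
      intro ω
      have hy2 : (Y 0 ω) ^ 2 ≤ (X 0 ω) ^ 2 := by
        rcases le_total (X 0 ω) v with h | h
        · simp [hY, min_eq_left h]
        · have hYv : Y 0 ω = v := by simp [hY, min_eq_right h]
          rw [hYv]; nlinarith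
      have hyle : Y 0 ω ≤ v := min_le_right _ _
      by_cases hmem : X 0 ω ≤ 1 / l
      · have hind : A.indicator (fun _ => Real.exp (l * v)) ω = 0 := by
          apply Set.indicator_of_notMem
          simp only [hA, Set.mem_setOf_eq, not_lt]
          exact hmem
        rw [hind, add_zero]
        have hyl : Y 0 ω ≤ 1 / l := le_trans (min_le_left _ _) hmem
        have hle1 : l * Y 0 ω ≤ 1 := by
          calc l * Y 0 ω ≤ l * (1 / l) := mul_le_mul_of_nonneg_left hyl hl.le
          _ = 1 := by field_simp
        have he := exp_le_one_add_add_sq hle1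
        have h2 : (l * Y 0 ω) ^ 2 ≤ l ^ 2 * (X 0 ω) ^ 2 := by nlinarith [sq_nonneg l]
        nlinarith
      · push_neg at hmem
        have hind : A.indicator (fun _ => Real.exp (l * v)) ω = Real.exp (l * v) :=
          Set.indicator_of_mem (show ω ∈ A from hmem) _
        rw [hind]
        have hy0 : 0 < Y 0 ω := lt_min (lt_trans (by positivity) hmem) hv
        have h1 : Real.exp (l * Y 0 ω) ≤ Real.exp (l * v) :=
          Real.exp_le_exp.2 (mul_le_mul_of_nonneg_left hyle hl.le)
        nlinarith [sq_nonneg (l * X 0 ω), mul_pos hl hy0]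
    have hint_exp : Integrable (fun ω => Real.exp (l * Y 0 ω)) μ := by
      refine ⟨(((hYmeas 0).const_mul l).exp).aestronglyMeasurable, ?_⟩
      refine HasFiniteIntegral.of_bounded (C := Real.exp (l * v)) (ae_of_all _ fun ω => ?_)
      simp only [Real.norm_eq_abs, abs_of_pos (Real.exp_pos _)]
      exact Real.exp_le_exp.2 (mul_le_mul_of_nonneg_left (min_le_right _ _) hl.le)
    have hi1 : Integrable (fun ω => 1 + l * Y 0 ω) μ :=
      (integrable_const 1).add (hYint.const_mul l)
    have hi2 : Integrable (fun ω => (1 + l * Y 0 ω) + l ^ 2 * (X 0 ω) ^ 2) μ :=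
      hi1.add (hint2.const_mul _)
    have hiind : Integrable (A.indicator (fun _ => Real.exp (l * v))) μ :=
      (integrable_const _).indicator hAmeas
    have hint_rhs : Integrable (fun ω => (1 + l * Y 0 ω) + l ^ 2 * (X 0 ω) ^ 2
        + A.indicator (fun _ => Real.exp (l * v)) ω) μ := hi2.add hiind
    calc mgf (Y 0) μ l = ∫ ω, Real.exp (l * Y 0 ω) ∂μ := rfl
    _ ≤ ∫ ω, ((1 + l * Y 0 ω) + l ^ 2 * (X 0 ω) ^ 2
        + A.indicator (fun _ => Real.exp (l * v)) ω) ∂μ := by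
        refine integral_mono hint_exp hint_rhs (fun ω => ?_)
        have := hpt ω
        simpa [add_assoc] using this
    _ = ((∫ _ω, (1:ℝ) ∂μ) + l * μ[Y 0]) + l ^ 2 * σ ^ 2
        + Real.exp (l * v) * (μ A).toReal := by
        rw [integral_add hi2 hiind, integral_add hi1 (hint2.const_mul _),
          integral_add (integrable_const 1) (hYint.const_mul l)]
        rw [integral_const_mul, integral_const_mul, hvar, integral_indicator_const _ hAmeas]
        ring_nf
        rfl
    _ ≤ 1 + (l ^ 2 * σ ^ 2 + C_T * Real.exp (l * v) * l ^ θ) := by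
        have h4 : (∫ _ω, (1:ℝ) ∂μ) = 1 := by simp
        have h5 : l * μ[Y 0] ≤ 0 := mul_nonpos_of_nonneg_of_nonpos hl.le hYmean
        have h6 : Real.exp (l * v) * (μ A).toReal ≤ Real.exp (l * v) * (C_T * l ^ θ) :=
          mul_le_mul_of_nonneg_left hAbound (Real.exp_pos _).le
        rw [h4]
        nlinarith
    _ ≤ Real.exp (l ^ 2 * σ ^ 2 + C_T * Real.exp (l * v) * l ^ θ) := by
        have := Real.add_one_le_exp (l ^ 2 * σ ^ 2 + C_T * Real.exp (l * v) * l ^ θ)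
        linarith
  -- Chernoff
  have hTmeas : Measurable (∑ i ∈ Finset.range k, Y i) := by
    have : (∑ i ∈ Finset.range k, Y i) = fun ω => ∑ i ∈ Finset.range k, Y i ω := by
      ext ω; simp [Finset.sum_apply]
    rw [this]
    exact Finset.measurable_sum _ (fun i _ => hYmeas i)
  have hTint : Integrable (fun ω => Real.exp (l * (∑ i ∈ Finset.range k, Y i) ω)) μ := by
    refine ⟨((hTmeas.const_mul l).exp).aestronglyMeasurable, ?_⟩
    refine HasFiniteIntegral.of_bounded (C := Real.exp (l * (k * v))) (ae_of_all _ fun ω => ?_)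
    simp only [Real.norm_eq_abs, abs_of_pos (Real.exp_pos _)]
    apply Real.exp_le_exp.2
    apply mul_le_mul_of_nonneg_left _ hl.le
    calc (∑ i ∈ Finset.range k, Y i) ω = ∑ i ∈ Finset.range k, Y i ω := by
          simp [Finset.sum_apply]
    _ ≤ ∑ _i ∈ Finset.range k, v := Finset.sum_le_sum (fun i _ => min_le_right _ _)
    _ = k * v := by rw [Finset.sum_const, Finset.card_range, nsmul_eq_mul]
  have hch := measure_ge_le_exp_mul_mgf (μ := μ) (X := ∑ i ∈ Finset.range k, Y i) u hl.le hTint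
  have hset : {ω | u ≤ ∑ i ∈ Finset.range k, min (X i ω) v}
      = {ω | u ≤ (∑ i ∈ Finset.range k, Y i) ω} := by
    ext ω; simp [Finset.sum_apply, hY]
  rw [hset]
  refine hch.trans ?_
  rw [hYindep.mgf_sum hYmeas]
  have hmgfeq : ∀ i, mgf (Y i) μ l = mgf (Y 0) μ l := fun i =>
    ((hYident i).comp ((measurable_id.const_mul l).exp)).integral_eq
  have hprod : ∏ i ∈ Finset.range k, mgf (Y i) μ l = (mgf (Y 0) μ l) ^ k := by
    rw [Finset.prod_congr rfl (fun i _ => hmgfeq i), Finset.prod_const, Finset.card_range]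
  rw [hprod]
  calc Real.exp (-l * u) * mgf (Y 0) μ l ^ k
      ≤ Real.exp (-l * u) * (Real.exp (l ^ 2 * σ ^ 2 + C_T * Real.exp (l * v) * l ^ θ)) ^ k := by
        apply mul_le_mul_of_nonneg_left _ (Real.exp_pos _).le
        exact pow_le_pow_left₀ mgf_nonneg hmgf k
    _ = Real.exp (-l * u + k * (l ^ 2 * σ ^ 2 + C_T * Real.exp (l * v) * l ^ θ)) := by
        rw [← Real.exp_nat_mul, ← Real.exp_add]

set_option maxHeartbeats 8000000 in
theorem sum_tail_bound_regular_tails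
    {Ω : Type*} [MeasurableSpace Ω] (μ : Measure Ω) [IsProbabilityMeasure μ]
    (X : ℕ → Ω → ℝ) (hmeas : ∀ i, Measurable (X i))
    (hindep : iIndepFun X μ)
    (hident : ∀ i, IdentDistrib (X i) (X 0) μ μ)
    (σ : ℝ) (hσ : 0 < σ)
    (hint : Integrable (X 0) μ) (hmean : μ[X 0] = 0)
    (hint2 : Integrable (fun ω => (X 0 ω) ^ 2) μ) (hvar : μ[fun ω => (X 0 ω) ^ 2] = σ ^ 2)
    (a θ : ℝ) (ha : 0 < a) (hθ : 2 < θ)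
    (htail : Tendsto (fun x : ℝ => (μ {ω | x ≤ X 0 ω}).toReal / (a * x ^ (-θ)))
      atTop (nhds 1)) :
    ∃ c₁ c₂ : ℝ, 0 < c₁ ∧ 0 < c₂ ∧ ∀ (k : ℕ) (ε : ℝ), 1 ≤ k → 0 < ε →
      (μ {ω | ε * k ≤ ∑ i ∈ Finset.range k, X i ω}).toReal
        ≤ c₁ * (ε ^ (-θ) * (k : ℝ) ^ (-(θ - 1)) + Real.exp (-c₂ * ε ^ 2 * k)) := by
  classical
  -- eventual tail bound
  have htail2 : ∀ᶠ x : ℝ in atTop, (μ {ω | x ≤ X 0 ω}).toReal ≤ 2 * a * x ^ (-θ) := by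
    have h1 : ∀ᶠ x : ℝ in atTop, (μ {ω | x ≤ X 0 ω}).toReal / (a * x ^ (-θ)) ≤ 2 :=
      htail.eventually_le_const one_lt_two
    filter_upwards [h1, eventually_gt_atTop (0:ℝ)] with x hx hx0
    have hden : 0 < a * x ^ (-θ) := mul_pos ha (Real.rpow_pos_of_pos hx0 _)
    rw [div_le_iff₀ hden] at hx
    calc (μ {ω | x ≤ X 0 ω}).toReal ≤ 2 * (a * x ^ (-θ)) := hx
    _ = 2 * a * x ^ (-θ) := by ring
  obtain ⟨x₀, hx₀⟩ := eventually_atTop.1 htail2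
  set v₀ : ℝ := max x₀ 1 with hv₀def
  have hv₀1 : (1:ℝ) ≤ v₀ := le_max_right _ _
  have hv₀0 : (0:ℝ) < v₀ := by linarith
  have hv₀tail : ∀ x : ℝ, v₀ ≤ x → (μ {ω | x ≤ X 0 ω}).toReal ≤ 2 * a * x ^ (-θ) :=
    fun x hx => hx₀ x (le_trans (le_max_left _ _) hx)
  set C_T : ℝ := max (2 * a) (v₀ ^ θ) with hCTdef
  have hCT0 : 0 < C_T := lt_of_lt_of_le (by linarith) (le_max_left _ _)
  have hCT : ∀ x : ℝ, 0 < x → (μ {ω | x ≤ X 0 ω}).toReal ≤ C_T * x ^ (-θ) := by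
    intro x hx
    rcases le_or_gt v₀ x with h | h
    · exact (hv₀tail x h).trans (mul_le_mul_of_nonneg_right (le_max_left _ _)
        (Real.rpow_nonneg hx.le _))
    · have h1 : (μ {ω | x ≤ X 0 ω}).toReal ≤ 1 := by
        have h2 : μ {ω | x ≤ X 0 ω} ≤ 1 := prob_le_one
        have := ENNReal.toReal_mono ENNReal.one_ne_top h2
        simpa using this
      have hxθ : x ^ θ ≤ v₀ ^ θ := Real.rpow_le_rpow hx.le h.le (by linarith)
      have hxθ0 : (0:ℝ) < x ^ θ := Real.rpow_pos_of_pos hx θ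
      have h2 : (1:ℝ) ≤ v₀ ^ θ * x ^ (-θ) := by
        rw [Real.rpow_neg hx.le]
        calc (1:ℝ) = x ^ θ * (x ^ θ)⁻¹ := by field_simp
        _ ≤ v₀ ^ θ * (x ^ θ)⁻¹ := mul_le_mul_of_nonneg_right hxθ (by positivity)
      calc (μ {ω | x ≤ X 0 ω}).toReal ≤ 1 := h1
      _ ≤ v₀ ^ θ * x ^ (-θ) := h2
      _ ≤ C_T * x ^ (-θ) := mul_le_mul_of_nonneg_right (le_max_right _ _)
          (Real.rpow_nonneg hx.le _)
  obtain ⟨c_θ, hcθ1, hcθ⟩ := rpow_le_mul_exp θ (by linarith)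
  have h4θ : (0:ℝ) < 4 ^ θ := Real.rpow_pos_of_pos (by norm_num) θ
  set C₄ : ℝ := C_T * 4 ^ θ * c_θ * Real.exp 2 with hC₄def
  have hC₄0 : 0 < C₄ := by positivity
  set K₁ : ℝ := max 1 (2 * v₀ ^ 2 / σ ^ 2) with hK₁def
  have hK₁1 : (1:ℝ) ≤ K₁ := le_max_left _ _
  set q₀ : ℝ := (4 * v₀) ^ (-θ) * K₁ ^ (-(θ - 1)) with hq₀def
  have hq₀ : 0 < q₀ := mul_pos (Real.rpow_pos_of_pos (by linarith) _)
    (Real.rpow_pos_of_pos (by linarith) _)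
  set c₁ : ℝ := 2 * a * 4 ^ θ + Real.exp C₄ + Real.exp 2 + 1 / q₀ + 1 with hc₁def
  have hc₁0 : 0 < c₁ := by
    have h1 : 0 < 2 * a * 4 ^ θ := by positivity
    have h2 := Real.exp_pos C₄
    have h3 := Real.exp_pos 2
    have h4 : 0 < 1 / q₀ := by positivity
    rw [hc₁def]; linarith
  refine ⟨c₁, 1 / (4 * σ ^ 2), hc₁0, by positivity, ?_⟩
  intro k ε hk hε
  have hk1 : (1:ℝ) ≤ (k:ℝ) := by exact_mod_cast hk
  have hk0 : (0:ℝ) < (k:ℝ) := by linarith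
  set Q : ℝ := ε ^ (-θ) * (k:ℝ) ^ (-(θ - 1)) with hQdef
  have hQ0 : 0 < Q := mul_pos (Real.rpow_pos_of_pos hε _) (Real.rpow_pos_of_pos hk0 _)
  set E : ℝ := Real.exp (-(1 / (4 * σ ^ 2)) * ε ^ 2 * k) with hEdef
  have hE0 : 0 < E := Real.exp_pos _
  have hP1 : (μ {ω | ε * k ≤ ∑ i ∈ Finset.range k, X i ω}).toReal ≤ 1 := by
    have h2 : μ {ω | ε * k ≤ ∑ i ∈ Finset.range k, X i ω} ≤ 1 := prob_le_one
    have := ENNReal.toReal_mono ENNReal.one_ne_top h2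
    simpa using this
  have hc₁1 : (1:ℝ) ≤ c₁ := by
    have h1 : 0 < 2 * a * 4 ^ θ := by positivity
    have h2 := Real.exp_pos C₄
    have h3 := Real.exp_pos 2
    have h4 : 0 < 1 / q₀ := by positivity
    rw [hc₁def]; linarith
  rcases le_or_gt 1 Q with hQ1 | hQ1
  · -- trivial regime: Q ≥ 1
    calc (μ {ω | ε * k ≤ ∑ i ∈ Finset.range k, X i ω}).toReal ≤ 1 := hP1
    _ ≤ c₁ * Q := by nlinarith
    _ ≤ c₁ * (Q + E) := by nlinarith
  rcases lt_or_ge (ε ^ 2 * k) (8 * σ ^ 2) with hB | hB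
  · -- trivial regime: small ε²k
    have hEc : Real.exp (-2 : ℝ) ≤ E := by
      rw [hEdef]
      apply Real.exp_le_exp.2
      have hσ2 : (0:ℝ) < 4 * σ ^ 2 := by positivity
      have h : (1 / (4 * σ ^ 2)) * ε ^ 2 * k ≤ 2 := by
        rw [div_mul_eq_mul_div, one_mul, div_mul_eq_mul_div, div_le_iff₀ hσ2]
        nlinarith
      linarith
    have h5 : Real.exp 2 * E ≥ 1 := by
      calc Real.exp 2 * E ≥ Real.exp 2 * Real.exp (-2) :=
        mul_le_mul_of_nonneg_left hEc (Real.exp_pos 2).le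
      _ = 1 := by rw [← Real.exp_add]; norm_num
    have hc₁e : Real.exp 2 ≤ c₁ := by
      have h1 : 0 < 2 * a * 4 ^ θ := by positivity
      have h2 := Real.exp_pos C₄
      have h4 : 0 < 1 / q₀ := by positivity
      rw [hc₁def]; linarith
    calc (μ {ω | ε * k ≤ ∑ i ∈ Finset.range k, X i ω}).toReal ≤ 1 := hP1
    _ ≤ Real.exp 2 * E := by linarith
    _ ≤ c₁ * E := mul_le_mul_of_nonneg_right hc₁e hE0.le
    _ ≤ c₁ * (Q + E) := by nlinarith
  rcases lt_or_ge (ε * k) (4 * v₀) with hv4 | hv4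
  · -- trivial regime: bounded region
    have hε4 : ε ≤ 4 * v₀ := by nlinarith
    have hεv : 2 * σ ^ 2 ≤ ε * v₀ := by nlinarith
    have hkK : (k:ℝ) ≤ K₁ := by
      have h1 : (k:ℝ) ≤ 4 * v₀ / ε := by
        rw [le_div_iff₀ hε]
        nlinarith
      have h2 : 4 * v₀ / ε ≤ 2 * v₀ ^ 2 / σ ^ 2 := by
        rw [div_le_div_iff₀ hε (by positivity)]
        nlinarith [mul_le_mul_of_nonneg_left hεv (by linarith : (0:ℝ) ≤ 2 * v₀)]
      calc (k:ℝ) ≤ 2 * v₀ ^ 2 / σ ^ 2 := le_trans h1 h2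
      _ ≤ K₁ := le_max_right _ _
    have hQq : q₀ ≤ Q := by
      rw [hq₀def, hQdef]
      apply mul_le_mul
      · exact Real.rpow_le_rpow_of_nonpos (by positivity) hε4 (by linarith)
      · exact Real.rpow_le_rpow_of_nonpos hk0 hkK (by linarith)
      · positivity
      · positivity
    have hc₁q : 1 / q₀ ≤ c₁ := by
      have h1 : 0 < 2 * a * 4 ^ θ := by positivity
      have h2 := Real.exp_pos C₄
      have h3 := Real.exp_pos 2
      rw [hc₁def]; linarith
    have h6 : 1 ≤ c₁ * Q := by
      calc (1:ℝ) = (1 / q₀) * q₀ := by field_simp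
      _ ≤ c₁ * Q := by
          apply mul_le_mul hc₁q hQq hq₀.le (by linarith)
    calc (μ {ω | ε * k ≤ ∑ i ∈ Finset.range k, X i ω}).toReal ≤ 1 := hP1
    _ ≤ c₁ * Q := h6
    _ ≤ c₁ * (Q + E) := by nlinarith
  -- MAIN REGIME
  have hu0 : (0:ℝ) < ε * k := by positivity
  set v : ℝ := ε * k / 4 with hvdef
  have hv₀v : v₀ ≤ v := by rw [hvdef]; linarith
  have hv0 : (0:ℝ) < v := by linarith
  have hQeq : (k:ℝ) * (ε * k) ^ (-θ) = Q := by
    rw [Real.mul_rpow hε.le hk0.le, hQdef,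
      show -(θ - 1) = -θ + 1 by ring, Real.rpow_add hk0, Real.rpow_one]
    ring
  -- union bound
  have hsplit : (μ {ω | ε * k ≤ ∑ i ∈ Finset.range k, X i ω}).toReal
      ≤ (k:ℝ) * (2 * a * v ^ (-θ))
        + (μ {ω | ε * k ≤ ∑ i ∈ Finset.range k, min (X i ω) v}).toReal := by
    have hsub : {ω | ε * k ≤ ∑ i ∈ Finset.range k, X i ω}
        ⊆ (⋃ i ∈ Finset.range k, {ω | v ≤ X i ω})
          ∪ {ω | ε * k ≤ ∑ i ∈ Finset.range k, min (X i ω) v} := by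
      intro ω hω
      by_cases hex : ∃ i ∈ Finset.range k, v ≤ X i ω
      · obtain ⟨i, hi, hvi⟩ := hex
        exact Or.inl (Set.mem_biUnion hi hvi)
      · push_neg at hex
        refine Or.inr ?_
        have heq : ∀ i ∈ Finset.range k, min (X i ω) v = X i ω :=
          fun i hi => min_eq_left (hex i hi).le
        simp only [Set.mem_setOf_eq] at hω ⊢
        rw [Finset.sum_congr rfl heq]
        exact hω
    have h1 : μ {ω | ε * k ≤ ∑ i ∈ Finset.range k, X i ω}
        ≤ (∑ _i ∈ Finset.range k, μ {ω | v ≤ X 0 ω})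
          + μ {ω | ε * k ≤ ∑ i ∈ Finset.range k, min (X i ω) v} := by
      have h2 : ∀ i, μ {ω | v ≤ X i ω} = μ {ω | v ≤ X 0 ω} := by
        intro i
        have := (hident i).measure_mem_eq (measurableSet_Ici (a := v))
        exact this
      refine le_trans (measure_mono hsub) (le_trans (measure_union_le _ _) ?_)
      refine add_le_add_left (le_trans (measure_biUnion_finset_le _ _) ?_) _
      exact le_of_eq (Finset.sum_congr rfl (fun i _ => h2 i))
    have hne : (∑ _i ∈ Finset.range k, μ {ω | v ≤ X 0 ω})
        + μ {ω | ε * k ≤ ∑ i ∈ Finset.range k, min (X i ω) v} ≠ ⊤ := by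
      apply ENNReal.add_ne_top.2
      constructor
      · exact (ENNReal.sum_lt_top.2 (fun i _ => measure_lt_top μ _)).ne
      · exact measure_ne_top μ _
    calc (μ {ω | ε * k ≤ ∑ i ∈ Finset.range k, X i ω}).toReal
        ≤ ((∑ _i ∈ Finset.range k, μ {ω | v ≤ X 0 ω})
          + μ {ω | ε * k ≤ ∑ i ∈ Finset.range k, min (X i ω) v}).toReal :=
          ENNReal.toReal_mono hne h1
    _ = (k:ℝ) * (μ {ω | v ≤ X 0 ω}).toReal
          + (μ {ω | ε * k ≤ ∑ i ∈ Finset.range k, min (X i ω) v}).toReal := by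
        rw [ENNReal.toReal_add (ENNReal.add_ne_top.1 hne).1 (measure_ne_top μ _)]
        congr 1
        rw [Finset.sum_const, Finset.card_range, ENNReal.toReal_nsmul]
        simp [nsmul_eq_mul]
    _ ≤ (k:ℝ) * (2 * a * v ^ (-θ))
          + (μ {ω | ε * k ≤ ∑ i ∈ Finset.range k, min (X i ω) v}).toReal := by
        have := hv₀tail v hv₀v
        have hmul := mul_le_mul_of_nonneg_left this hk0.le
        linarith
  have hfirst : (k:ℝ) * (2 * a * v ^ (-θ)) = 2 * a * 4 ^ θ * Q := by
    have hvθ : v ^ (-θ) = (ε * k) ^ (-θ) * 4 ^ θ := by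
      rw [hvdef, Real.div_rpow hu0.le (by norm_num), Real.rpow_neg (by norm_num : (0:ℝ) ≤ 4)]
      field_simp
    rw [hvθ, ← hQeq]
    ring
  -- key Chernoff estimate
  have hkey : ∀ L : ℝ, 0 < L → L ≤ ε ^ 2 * k / (8 * σ ^ 2) →
      (μ {ω | ε * k ≤ ∑ i ∈ Finset.range k, min (X i ω) v}).toReal
        ≤ Real.exp (-(2 * L) + C_T * 4 ^ θ * c_θ * Real.exp (2 * L) * Q) := by
    intro L hL hLle
    set l : ℝ := 4 * L / (ε * k) with hldef
    have hl0 : 0 < l := by positivity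
    have hch := chernoff_trunc μ X hmeas hindep hident σ hint hmean hint2 hvar θ C_T hCT
      k (ε * k) v l hv0 hl0
    refine hch.trans (Real.exp_le_exp.2 ?_)
    have hlu : -l * (ε * k) = -(4 * L) := by rw [hldef]; field_simp
    have hlv : l * v = L := by rw [hldef, hvdef]; field_simp
    have h8 : 8 * σ ^ 2 * L ≤ ε ^ 2 * k := by
      rw [le_div_iff₀ (by positivity)] at hLle; linarith
    have h2 : (k:ℝ) * (l ^ 2 * σ ^ 2) ≤ 2 * L := by
      have heq : (k:ℝ) * (l ^ 2 * σ ^ 2) = 16 * L ^ 2 * σ ^ 2 / (ε ^ 2 * k) := by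
        rw [hldef]; field_simp; ring
      rw [heq, div_le_iff₀ (by positivity)]
      have h9 := mul_le_mul_of_nonneg_left h8 (by linarith : (0:ℝ) ≤ 2 * L)
      calc 16 * L ^ 2 * σ ^ 2 = 2 * L * (8 * σ ^ 2 * L) := by ring
      _ ≤ 2 * L * (ε ^ 2 * k) := h9
    have h3 : (k:ℝ) * (C_T * Real.exp (l * v) * l ^ θ)
        ≤ C_T * 4 ^ θ * c_θ * Real.exp (2 * L) * Q := by
      have hlθ : l ^ θ = 4 ^ θ * L ^ θ * (ε * k) ^ (-θ) := by
        rw [hldef, Real.div_rpow (by positivity) hu0.le,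
          Real.mul_rpow (by norm_num) hL.le, Real.rpow_neg hu0.le, div_eq_mul_inv]
      have hLθ : L ^ θ * Real.exp L ≤ c_θ * Real.exp (2 * L) := by
        calc L ^ θ * Real.exp L ≤ c_θ * Real.exp L * Real.exp L :=
          mul_le_mul_of_nonneg_right (hcθ L hL.le) (Real.exp_pos _).le
        _ = c_θ * Real.exp (2 * L) := by rw [mul_assoc, ← Real.exp_add, two_mul]
      calc (k:ℝ) * (C_T * Real.exp (l * v) * l ^ θ)
          = C_T * (L ^ θ * Real.exp L) * 4 ^ θ * ((k:ℝ) * (ε * k) ^ (-θ)) := by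
            rw [hlv, hlθ]; ring
        _ = C_T * 4 ^ θ * (L ^ θ * Real.exp L) * Q := by rw [hQeq]; ring
        _ ≤ C_T * 4 ^ θ * (c_θ * Real.exp (2 * L)) * Q := by
            apply mul_le_mul_of_nonneg_right _ hQ0.le
            exact mul_le_mul_of_nonneg_left hLθ (by positivity)
        _ = C_T * 4 ^ θ * c_θ * Real.exp (2 * L) * Q := by ring
    rw [mul_add (k:ℝ), hlu] at *
    linarith
  have hC₃pos : (0:ℝ) < C_T * 4 ^ θ * c_θ := by positivity
  have hC₃C₄ : C_T * 4 ^ θ * c_θ ≤ C₄ := by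
    rw [hC₄def]
    nlinarith [Real.exp_one_gt_d9, Real.exp_le_exp.2 (by norm_num : (1:ℝ) ≤ 2),
      Real.one_le_exp (by norm_num : (0:ℝ) ≤ 2)]
  have hexpC₄c₁ : Real.exp C₄ ≤ c₁ := by
    have h1 : 0 < 2 * a * 4 ^ θ := by positivity
    have h3 := Real.exp_pos 2
    have h4 : 0 < 1 / q₀ := by positivity
    rw [hc₁def]; linarith
  have hcoef : 2 * a * 4 ^ θ + Real.exp C₄ ≤ c₁ := by
    have h3 := Real.exp_pos 2
    have h4 : 0 < 1 / q₀ := by positivity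
    rw [hc₁def]; linarith
  rcases le_or_gt Q E with hQE | hQE
  · -- exponential branch
    set L : ℝ := ε ^ 2 * k / (8 * σ ^ 2) with hLdef
    have hL0 : 0 < L := by positivity
    have hkey1 := hkey L hL0 le_rfl
    have h2L : 2 * L = 1 / (4 * σ ^ 2) * ε ^ 2 * k := by
      rw [hLdef]; field_simp; ring
    have hEL : Real.exp (2 * L) * E = 1 := by
      rw [hEdef, ← Real.exp_add,
        show 2 * L + -(1 / (4 * σ ^ 2)) * ε ^ 2 * (k:ℝ) = 0 by rw [h2L]; ring]
      exact Real.exp_zero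
    have hexp2LQ : Real.exp (2 * L) * Q ≤ 1 := by
      calc Real.exp (2 * L) * Q ≤ Real.exp (2 * L) * E :=
        mul_le_mul_of_nonneg_left hQE (Real.exp_pos _).le
      _ = 1 := hEL
    have htrunc : (μ {ω | ε * k ≤ ∑ i ∈ Finset.range k, min (X i ω) v}).toReal
        ≤ Real.exp C₄ * E := by
      refine hkey1.trans ?_
      have harg : -(2 * L) + C_T * 4 ^ θ * c_θ * Real.exp (2 * L) * Q ≤ C₄ + -(2 * L) := by
        have : C_T * 4 ^ θ * c_θ * Real.exp (2 * L) * Q ≤ C_T * 4 ^ θ * c_θ * 1 := by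
          rw [mul_assoc (C_T * 4 ^ θ * c_θ)]
          exact mul_le_mul_of_nonneg_left hexp2LQ hC₃pos.le
        linarith
      calc Real.exp (-(2 * L) + C_T * 4 ^ θ * c_θ * Real.exp (2 * L) * Q)
          ≤ Real.exp (C₄ + -(2 * L)) := Real.exp_le_exp.2 harg
      _ = Real.exp C₄ * Real.exp (-(2 * L)) := Real.exp_add _ _
      _ = Real.exp C₄ * E := by
          rw [hEdef, show -(1 / (4 * σ ^ 2)) * ε ^ 2 * (k:ℝ) = -(2 * L) by rw [h2L]; ring]
    calc (μ {ω | ε * k ≤ ∑ i ∈ Finset.range k, X i ω}).toReal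
        ≤ (k:ℝ) * (2 * a * v ^ (-θ))
          + (μ {ω | ε * k ≤ ∑ i ∈ Finset.range k, min (X i ω) v}).toReal := hsplit
    _ ≤ 2 * a * 4 ^ θ * Q + Real.exp C₄ * E := by rw [hfirst]; linarith
    _ ≤ c₁ * Q + c₁ * E := by
        have h2a : 2 * a * 4 ^ θ ≤ c₁ := by
          have h3 := Real.exp_pos 2
          have h2 := Real.exp_pos C₄
          have h4 : 0 < 1 / q₀ := by positivity
          rw [hc₁def]; linarith
        exact add_le_add (mul_le_mul_of_nonneg_right h2a hQ0.le)
          (mul_le_mul_of_nonneg_right hexpC₄c₁ hE0.le)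
    _ = c₁ * (Q + E) := by ring
  · -- polynomial branch
    set L : ℝ := max 1 (-Real.log Q / 2) with hLdef
    have hL1 : (1:ℝ) ≤ L := le_max_left _ _
    have hL0 : (0:ℝ) < L := by linarith
    have hlogQ : Real.log Q ≤ 0 := Real.log_nonpos hQ0.le hQ1.le
    have hlogE : Real.log E = -(1 / (4 * σ ^ 2)) * ε ^ 2 * k := by
      rw [hEdef, Real.log_exp]
    have hlogEQ : Real.log E < Real.log Q := Real.log_lt_log hE0 hQE
    have hLle : L ≤ ε ^ 2 * k / (8 * σ ^ 2) := by
      apply max_le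
      · rw [le_div_iff₀ (by positivity)]; linarith
      · have h1 : -(ε ^ 2 * (k:ℝ) / (4 * σ ^ 2)) < Real.log Q := by
          rw [hlogE] at hlogEQ
          calc -(ε ^ 2 * (k:ℝ) / (4 * σ ^ 2)) = -(1 / (4 * σ ^ 2)) * ε ^ 2 * k := by ring
          _ < Real.log Q := hlogEQ
        have heq : ε ^ 2 * (k:ℝ) / (8 * σ ^ 2) = ε ^ 2 * (k:ℝ) / (4 * σ ^ 2) / 2 := by ring
        rw [heq]
        linarith
    have hkey2 := hkey L hL0 hLle
    have h2LQ : 2 * L + Real.log Q ≤ 2 := by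
      rcases max_cases (1:ℝ) (-Real.log Q / 2) with ⟨hLeq, hge⟩ | ⟨hLeq, hlt⟩ <;>
        rw [hLdef, hLeq] <;> linarith
    have hexp2LQ : Real.exp (2 * L) * Q ≤ Real.exp 2 := by
      calc Real.exp (2 * L) * Q = Real.exp (2 * L + Real.log Q) := by
            rw [Real.exp_add, Real.exp_log hQ0]
      _ ≤ Real.exp 2 := Real.exp_le_exp.2 h2LQ
    have hneg2L : -(2 * L) ≤ Real.log Q := by
      have h := le_max_right (1:ℝ) (-Real.log Q / 2)
      rw [← hLdef] at h
      linarith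
    have htrunc : (μ {ω | ε * k ≤ ∑ i ∈ Finset.range k, min (X i ω) v}).toReal
        ≤ Real.exp C₄ * Q := by
      refine hkey2.trans ?_
      have harg : -(2 * L) + C_T * 4 ^ θ * c_θ * Real.exp (2 * L) * Q ≤ Real.log Q + C₄ := by
        have h5 : C_T * 4 ^ θ * c_θ * Real.exp (2 * L) * Q
            ≤ C_T * 4 ^ θ * c_θ * Real.exp 2 := by
          rw [mul_assoc (C_T * 4 ^ θ * c_θ)]
          exact mul_le_mul_of_nonneg_left hexp2LQ hC₃pos.le
        rw [hC₄def]
        linarith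
      calc Real.exp (-(2 * L) + C_T * 4 ^ θ * c_θ * Real.exp (2 * L) * Q)
          ≤ Real.exp (Real.log Q + C₄) := Real.exp_le_exp.2 harg
      _ = Q * Real.exp C₄ := by rw [Real.exp_add, Real.exp_log hQ0]
      _ = Real.exp C₄ * Q := mul_comm _ _
    calc (μ {ω | ε * k ≤ ∑ i ∈ Finset.range k, X i ω}).toReal
        ≤ (k:ℝ) * (2 * a * v ^ (-θ))
          + (μ {ω | ε * k ≤ ∑ i ∈ Finset.range k, min (X i ω) v}).toReal := hsplit
    _ ≤ 2 * a * 4 ^ θ * Q + Real.exp C₄ * Q := by rw [hfirst]; linarith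
    _ = (2 * a * 4 ^ θ + Real.exp C₄) * Q := by ring
    _ ≤ c₁ * Q := mul_le_mul_of_nonneg_right hcoef hQ0.le
    _ ≤ c₁ * (Q + E) := by
        have h6 := mul_pos hc₁0 hE0
        have h7 : c₁ * (Q + E) = c₁ * Q + c₁ * E := mul_add _ _ _
        linarith
end

section
/- Let f : [0,1] → [0,1] be the generating function of a Böttcher-case offspring law (p₀ = p₁ = 0), with μ = min{j : p_j > 0} ≥ 2. Then for each s ∈ [0,1], the limit B(s) := lim_{n→∞} (fₙ(s))^{μ^{-n}} exists, where fₙ denotes the n-th iterate of f. -/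
open Real Filter

/-- In the Böttcher case, `(fₙ(s))^{μ^{-n}}` converges for every `s ∈ [0,1]`. -/
theorem boettcher_limit_exists
    (p : ℕ → ℝ) (hp : ∀ j, 0 ≤ p j) (hsum : ∑' j, p j = 1)
    (μ : ℕ) (hμ : 2 ≤ μ) (hpμ : 0 < p μ) (hmin : ∀ j, p j ≠ 0 → μ ≤ j)
    (f : ℝ → ℝ) (hf : ∀ s : ℝ, f s = ∑' j, p j * s ^ j) :
    ∀ s : ℝ, 0 ≤ s → s ≤ 1 →
      ∃ B : ℝ, Tendsto (fun n : ℕ => (f^[n] s) ^ (((μ : ℝ) ^ n)⁻¹)) atTop (nhds B) := by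
  have hpsum : Summable p := by
    by_contra h
    rw [tsum_eq_zero_of_not_summable h] at hsum
    norm_num at hsum
  have hμ1 : (1 : ℝ) < (μ : ℝ) := by
    exact_mod_cast lt_of_lt_of_le one_lt_two hμ
  have hμ0 : (0 : ℝ) < (μ : ℝ) := lt_trans one_pos hμ1
  have hμn : ∀ n : ℕ, (0 : ℝ) < ((μ : ℝ) ^ n) := fun n => pow_pos hμ0 n
  -- key bounds for f on [0,1]
  have key : ∀ x : ℝ, 0 ≤ x → x ≤ 1 → p μ * x ^ μ ≤ f x ∧ f x ≤ x ^ μ := by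
    intro x hx0 hx1
    have hsumm : Summable (fun j => p j * x ^ j) := by
      apply Summable.of_nonneg_of_le
        (fun j => mul_nonneg (hp j) (pow_nonneg hx0 j)) (fun j => ?_) hpsum
      calc p j * x ^ j ≤ p j * 1 :=
            mul_le_mul_of_nonneg_left (pow_le_one₀ hx0 hx1) (hp j)
        _ = p j := mul_one _
    constructor
    · rw [hf]
      exact Summable.le_tsum hsumm μ (fun j _ => mul_nonneg (hp j) (pow_nonneg hx0 j))
    · rw [hf]
      have h1 : x ^ μ = ∑' j, p j * x ^ μ := by
        rw [tsum_mul_right, hsum, one_mul]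
      rw [h1]
      apply Summable.tsum_le_tsum _ hsumm (hpsum.mul_right _)
      intro j
      by_cases hj : p j = 0
      · simp [hj]
      · exact mul_le_mul_of_nonneg_left
          (pow_le_pow_of_le_one hx0 hx1 (hmin j hj)) (hp j)
  intro s hs0 hs1
  rcases eq_or_lt_of_le hs0 with hs | hs
  · -- s = 0 : the sequence is constantly 0
    have hf0 : f 0 = 0 := by
      have h := key 0 le_rfl zero_le_one
      have hz : (0 : ℝ) ^ μ = 0 := zero_pow (by omega)
      have h1 := h.2
      have h2 := h.1
      rw [hz] at h1
      rw [hz, mul_zero] at h2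
      linarith
    have hiters : ∀ n : ℕ, f^[n] (0 : ℝ) = 0 := by
      intro n
      induction n with
      | zero => simp
      | succ n ih => rw [Function.iterate_succ_apply', ih, hf0]
    refine ⟨0, ?_⟩
    have : (fun n : ℕ => (f^[n] s) ^ (((μ : ℝ) ^ n)⁻¹)) = fun _ => (0 : ℝ) := by
      funext n
      rw [← hs, hiters n]
      exact Real.zero_rpow (by positivity)
    rw [this]
    exact tendsto_const_nhds
  · -- 0 < s ≤ 1
    have hx : ∀ n : ℕ, 0 < f^[n] s ∧ f^[n] s ≤ 1 := by
      intro n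
      induction n with
      | zero => exact ⟨hs, hs1⟩
      | succ n ih =>
        rw [Function.iterate_succ_apply']
        obtain ⟨h1, h2⟩ := key _ ih.1.le ih.2
        constructor
        · exact lt_of_lt_of_le (mul_pos hpμ (pow_pos ih.1 μ)) h1
        · exact le_trans h2 (pow_le_one₀ ih.1.le ih.2)
    set L : ℕ → ℝ := fun n => Real.log (f^[n] s) with hL
    have hLnonpos : ∀ n, L n ≤ 0 := fun n => Real.log_nonpos (hx n).1.le (hx n).2
    -- recursion bounds on logs
    have hrecu : ∀ n : ℕ, L (n + 1) ≤ (μ : ℝ) * L n := by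
      intro n
      have h2 := (key _ (hx n).1.le (hx n).2).2
      have hpos : 0 < f (f^[n] s) := by
        have h := (hx (n + 1)).1
        rwa [Function.iterate_succ_apply'] at h
      have := Real.log_le_log hpos h2
      rw [Real.log_pow] at this
      simpa [hL, Function.iterate_succ_apply'] using this
    have hrecl : ∀ n : ℕ, Real.log (p μ) + (μ : ℝ) * L n ≤ L (n + 1) := by
      intro n
      have h1 := (key _ (hx n).1.le (hx n).2).1
      have hpos : 0 < p μ * (f^[n] s) ^ μ := mul_pos hpμ (pow_pos (hx n).1 μ)
      have := Real.log_le_log hpos h1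
      rw [Real.log_mul (ne_of_gt hpμ) (ne_of_gt (pow_pos (hx n).1 μ)),
        Real.log_pow] at this
      simpa [hL, Function.iterate_succ_apply'] using this
    set a : ℕ → ℝ := fun n => L n * ((μ : ℝ) ^ n)⁻¹ with ha
    have hanti : Antitone a := by
      apply antitone_nat_of_succ_le
      intro n
      have h1 : L (n + 1) * ((μ : ℝ) ^ (n + 1))⁻¹ ≤ ((μ : ℝ) * L n) * ((μ : ℝ) ^ (n + 1))⁻¹ :=
        mul_le_mul_of_nonneg_right (hrecu n) (inv_nonneg.mpr (hμn (n + 1)).le)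
      have h2 : ((μ : ℝ) * L n) * ((μ : ℝ) ^ (n + 1))⁻¹ = L n * ((μ : ℝ) ^ n)⁻¹ := by
        rw [pow_succ]
        field_simp
      calc a (n + 1) = L (n + 1) * ((μ : ℝ) ^ (n + 1))⁻¹ := rfl
        _ ≤ ((μ : ℝ) * L n) * ((μ : ℝ) ^ (n + 1))⁻¹ := h1
        _ = L n * ((μ : ℝ) ^ n)⁻¹ := h2
    -- lower bound
    set c : ℝ := Real.log (p μ) with hc
    set K : ℝ := c / (1 - (μ : ℝ)) with hK
    have hc0 : c ≤ 0 := by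
      have hpμ1 : p μ ≤ 1 := by
        have := Summable.le_tsum hpsum μ (fun j _ => hp j)
        rwa [hsum] at this
      exact Real.log_nonpos hpμ.le hpμ1
    have hne : (1 : ℝ) - (μ : ℝ) ≠ 0 := by linarith
    have hK0 : 0 ≤ K := by
      rw [hK]
      exact div_nonneg_iff.mpr (Or.inr ⟨hc0, by linarith⟩)
    have hKK : K * (1 - (μ : ℝ)) = c := by
      rw [hK]; field_simp
    have hKc : c + ((μ : ℝ) - 1) * K = 0 := by nlinarith [hKK]
    have hlow : ∀ n : ℕ, (μ : ℝ) ^ n * (L 0 - K) ≤ L n - K := by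
      intro n
      induction n with
      | zero => simp
      | succ n ih =>
        have step : (μ : ℝ) * (L n - K) ≤ L (n + 1) - K := by
          have := hrecl n
          nlinarith [hKc]
        calc (μ : ℝ) ^ (n + 1) * (L 0 - K) = (μ : ℝ) * ((μ : ℝ) ^ n * (L 0 - K)) := by ring
          _ ≤ (μ : ℝ) * (L n - K) := by
              exact mul_le_mul_of_nonneg_left ih hμ0.le
          _ ≤ L (n + 1) - K := step
    have hbdd : ∀ n : ℕ, L 0 - K ≤ a n := by
      intro n
      have h1 : (μ : ℝ) ^ n * (L 0 - K) + K ≤ L n := by linarith [hlow n]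
      have h2 : ((μ : ℝ) ^ n * (L 0 - K) + K) * ((μ : ℝ) ^ n)⁻¹ ≤ a n :=
        mul_le_mul_of_nonneg_right h1 (inv_nonneg.mpr (hμn n).le)
      have h3 : ((μ : ℝ) ^ n * (L 0 - K) + K) * ((μ : ℝ) ^ n)⁻¹
          = (L 0 - K) + K * ((μ : ℝ) ^ n)⁻¹ := by
        field_simp
      have h4 : 0 ≤ K * ((μ : ℝ) ^ n)⁻¹ :=
        mul_nonneg hK0 (inv_nonneg.mpr (hμn n).le)
      linarith
    have hbdd' : BddBelow (Set.range a) := by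
      refine ⟨L 0 - K, ?_⟩
      rintro x ⟨n, rfl⟩
      exact hbdd n
    have hconv : Tendsto a atTop (nhds (⨅ n, a n)) :=
      tendsto_atTop_ciInf hanti hbdd'
    refine ⟨Real.exp (⨅ n, a n), ?_⟩
    have heq : (fun n : ℕ => (f^[n] s) ^ (((μ : ℝ) ^ n)⁻¹)) = fun n => Real.exp (a n) := by
      funext n
      rw [Real.rpow_def_of_pos (hx n).1]
    rw [heq]
    exact (Real.continuous_exp.tendsto _).comp hconv
end
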